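/- Let C ⊆ F^n be a constacyclic code of dimension k with k | n, generated by g(x) | x^n - a of degree n - k. If C is spanned by a basis of k codewords with pairwise disjoint supports, then there exists a codeword c ∈ C with Hamming weight exactly n/k. -/

import Mathlib

open Polynomial

noncomputable section

def shiftBy {F : Type*} [Field F] {n : ℕ} (a : F) (c : Fin n → F) : Fin n → F :=
  fun i => if _h : (i : ℕ) = 0 then a * c ⟨n - 1, by have := i.isLt; omega⟩
           else c ⟨(i : ℕ) - 1, by have := i.isLt; omega⟩

def codeOf {F : Type*} [Field F] (n : ℕ) (a : F) (g : F[X]) : Set (Fin n → F) :=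
  {v | ∃ h : F[X], ∀ i : Fin n, v i = ((g * h) %ₘ (X ^ n - C a)).coeff i}

def schurPow {F : Type*} [Field F] {n : ℕ} (W : Submodule F (Fin n → F)) : ℕ → Submodule F (Fin n → F)
  | 0 => W
  | 1 => W
  | (i+2) => Submodule.span F {x | ∃ c ∈ W, ∃ d ∈ schurPow W (i+1), x = c * d}

def wt {F : Type*} [Field F] {n : ℕ} (c : Fin n → F) : ℕ := {i | c i ≠ 0}.ncard

def dminW {F : Type*} [Field F] {n : ℕ} (W : Submodule F (Fin n → F)) : ℕ :=
  sInf {w | ∃ c ∈ W, c ≠ 0 ∧ wt c = w}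

def toPoly {F : Type*} [Field F] {n : ℕ} (c : Fin n → F) : F[X] :=
  ∑ i : Fin n, Polynomial.C (c i) * X ^ (i : ℕ)

open scoped Classical

open Fin.NatCast Fin.CommRing

/-- The constacyclic shift of a codeword is again a codeword. -/
theorem stmt10_shift_mem {F : Type*} [Field F] {n : ℕ} (hn : 0 < n) (a : F) (g : F[X])
    {v : Fin n → F} (hv : v ∈ codeOf n a g) : shiftBy a v ∈ codeOf n a g := by
  obtain ⟨h, hh⟩ := hv
  set f : F[X] := X ^ n - C a with hf
  have hfm : f.Monic := monic_X_pow_sub_C a hn.ne'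
  have hfdeg : f.degree = (n : ℕ) := degree_X_pow_sub_C hn a
  set p : F[X] := (g * h) %ₘ f with hp
  have hpdeg : p.degree < (n : ℕ) := by rw [← hfdeg]; exact degree_modByMonic_lt _ hfm
  have hpc : ∀ j, n ≤ j → p.coeff j = 0 := (degree_lt_iff_coeff_zero p n).mp hpdeg
  set c := p.coeff (n - 1) with hc
  have hXp : ∀ m : ℕ, (X * p).coeff m = if m = 0 then 0 else p.coeff (m-1) := by
    intro m
    rcases m with _ | t
    · simp [mul_coeff_zero]
    · simp [coeff_X_mul]
  have hfcoeff : ∀ j : ℕ, f.coeff j = (if j = n then 1 else 0) - (if j = 0 then a else 0) := by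
    intro j
    rw [hf, coeff_sub, coeff_X_pow, coeff_C]
  set q : F[X] := X * p - C c * f with hq
  have hqcoeff : ∀ m : ℕ, q.coeff m =
      (if m = 0 then 0 else p.coeff (m-1)) - c * ((if m = n then 1 else 0) - (if m = 0 then a else 0)) := by
    intro m
    rw [hq, coeff_sub, hXp, coeff_C_mul, hfcoeff]
  have hqdeg : q.degree < f.degree := by
    rw [hfdeg, degree_lt_iff_coeff_zero]
    intro m hm
    rw [hqcoeff]
    rcases eq_or_lt_of_le hm with hmn | hmn
    · subst hmn
      rw [if_neg hn.ne', if_pos rfl, if_neg hn.ne', hc]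
      ring
    · rw [if_neg (by omega), if_neg (by omega), if_neg (by omega), hpc _ (by omega)]
      ring
  have key : (g * (X * h)) %ₘ f = q := by
    have h1 : p + f * ((g * h) /ₘ f) = g * h := modByMonic_add_div _ _
    have h2 : q + f * (C c + X * ((g * h) /ₘ f)) = g * (X * h) := by
      calc q + f * (C c + X * ((g * h) /ₘ f))
          = X * (p + f * ((g * h) /ₘ f)) := by rw [hq]; ring
        _ = g * (X * h) := by rw [h1]; ring
    exact (div_modByMonic_unique _ _ hfm ⟨h2, hqdeg⟩).2
  refine ⟨X * h, ?_⟩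
  intro i
  rw [key, hqcoeff]
  by_cases hi : (i : ℕ) = 0
  · simp only [shiftBy]
    rw [dif_pos hi, if_pos hi, if_neg (by have := i.isLt; omega), if_pos hi, hh]
    simp [hc, mul_comm]
  · simp only [shiftBy]
    rw [dif_neg hi, if_neg hi, if_neg (by have := i.isLt; omega), if_neg hi, hh]
    simp

theorem stmt10_shift_ne_iff {F : Type*} [Field F] {N : ℕ} {a : F} (ha : a ≠ 0)
    (v : Fin (N+1) → F) (m : Fin (N+1)) : shiftBy a v (m+1) ≠ 0 ↔ v m ≠ 0 := by
  simp only [shiftBy]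
  by_cases hm : m = Fin.last N
  · have h0 : ((m + 1 : Fin (N+1)) : ℕ) = 0 := by rw [Fin.val_add_one, if_pos hm]
    rw [dif_pos h0]
    have : (⟨N + 1 - 1, by omega⟩ : Fin (N+1)) = m := by
      rw [hm]; rfl
    rw [this, mul_ne_zero_iff]
    simp [ha]
  · have h0 : ((m + 1 : Fin (N+1)) : ℕ) = (m : ℕ) + 1 := by
      rw [Fin.val_add_one, if_neg hm]
    rw [dif_neg (by omega)]
    have : (⟨((m + 1 : Fin (N+1)) : ℕ) - 1, by omega⟩ : Fin (N+1)) = m := by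
      apply Fin.ext; simp [h0]
    rw [this]

theorem stmt10_shift_supp {F : Type*} [Field F] {N : ℕ} {a : F} (ha : a ≠ 0)
    (v : Fin (N+1) → F) :
    Finset.univ.filter (fun m => shiftBy a v m ≠ 0) =
      (Finset.univ.filter (fun m => v m ≠ 0)).image (· + 1) := by
  ext m'
  simp only [Finset.mem_filter, Finset.mem_image, Finset.mem_univ, true_and]
  constructor
  · intro h
    refine ⟨m' - 1, ?_, by ring⟩
    rw [← stmt10_shift_ne_iff ha v (m' - 1)]
    simpa using h
  · rintro ⟨m, hm, rfl⟩
    exact (stmt10_shift_ne_iff ha v m).mpr hm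

/-- If a constacyclic code of dimension k (k ∣ n) is spanned by a basis of
k codewords with pairwise disjoint supports, then it has a codeword of weight exactly n/k. -/
theorem stmt10 {F : Type*} [Field F] [Fintype F] {n k : ℕ} (hn : 0 < n) (hk : 0 < k)
    (hkdvd : k ∣ n) (a : F) (ha : a ≠ 0)
    (g : F[X]) (hgdvd : g ∣ X ^ n - C a) (hgdeg : g.natDegree = n - k)
    (b : Fin k → Fin n → F)
    (hbmem : ∀ i, b i ∈ codeOf n a g)
    (hbind : LinearIndependent F b)
    (hbspan : ∀ v ∈ codeOf n a g, v ∈ Submodule.span F (Set.range b))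
    (hbdisj : ∀ i j : Fin k, i ≠ j → ∀ m : Fin n, b i m = 0 ∨ b j m = 0) :
    ∃ c ∈ codeOf n a g, c ≠ 0 ∧ wt c = n / k := by
  classical
  obtain ⟨N, rfl⟩ : ∃ N, n = N + 1 := ⟨n - 1, by omega⟩
  set i₀ : Fin k := ⟨0, hk⟩ with hi₀
  set S : Fin k → Finset (Fin (N+1)) := fun i => Finset.univ.filter (fun m => b i m ≠ 0) with hS
  have hSdisj : ∀ i j, i ≠ j → Disjoint (S i) (S j) := by
    intro i j hij
    rw [Finset.disjoint_left]
    intro m hmi hmj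
    simp only [hS, Finset.mem_filter, Finset.mem_univ, true_and] at hmi hmj
    rcases hbdisj i j hij m with h | h
    · exact hmi h
    · exact hmj h
  have hSne : ∀ i, (S i).Nonempty := by
    intro i
    have hbne := hbind.ne_zero i
    rw [Function.ne_iff] at hbne
    obtain ⟨m, hm⟩ := hbne
    exact ⟨m, by simp only [hS, Finset.mem_filter, Finset.mem_univ, true_and]; exact hm⟩
  have hun : ∀ (m : Fin (N+1)) i j, m ∈ S i → m ∈ S j → i = j := by
    intro m i j hi hj
    by_contra hij
    exact (Finset.disjoint_left.mp (hSdisj i j hij) hi) hj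
  -- support of span elements is a union of blocks
  have hspan : ∀ v : Fin (N+1) → F, v ∈ Submodule.span F (Set.range b) →
      ∃ T : Finset (Fin k), Finset.univ.filter (fun m => v m ≠ 0) = T.biUnion S := by
    intro v hv
    obtain ⟨lam, hl⟩ := (Submodule.mem_span_range_iff_exists_fun F).mp hv
    refine ⟨Finset.univ.filter (fun j => lam j ≠ 0), ?_⟩
    ext m
    simp only [hS, Finset.mem_filter, Finset.mem_biUnion, Finset.mem_univ, true_and]
    have hvm : v m = ∑ i, lam i * b i m := by
      rw [← hl, Finset.sum_apply]
      simp
    constructor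
    · intro hvm0
      by_contra hcon
      push_neg at hcon
      apply hvm0
      rw [hvm]
      apply Finset.sum_eq_zero
      intro i _
      by_cases h1 : lam i = 0
      · rw [h1, zero_mul]
      · rw [hcon i h1, mul_zero]
    · rintro ⟨j, hj1, hj2⟩
      have hv2 : v m = lam j * b j m := by
        rw [hvm]
        apply Finset.sum_eq_single_of_mem j (Finset.mem_univ j)
        intro i _ hij
        rcases hbdisj i j hij m with h | h
        · rw [h, mul_zero]
        · exact absurd h hj2
      rw [hv2]
      exact mul_ne_zero hj1 hj2
  -- the shift of a block is a union of blocks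
  have hstep : ∀ i : Fin k, ∃ T : Finset (Fin k), (S i).image (· + 1) = T.biUnion S := by
    intro i
    obtain ⟨T, hT⟩ := hspan (shiftBy a (b i))
      (hbspan _ (stmt10_shift_mem (by omega) a g (hbmem i)))
    refine ⟨T, ?_⟩
    rw [← hT, hS]
    exact (stmt10_shift_supp ha (b i)).symm
  choose T hT using hstep
  have hTne : ∀ i, (T i).Nonempty := by
    intro i
    obtain ⟨m, hm⟩ := hSne i
    have h1 : m + 1 ∈ (S i).image (· + 1) := Finset.mem_image_of_mem _ hm
    rw [hT i] at h1
    obtain ⟨j, hj, _⟩ := Finset.mem_biUnion.mp h1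
    exact ⟨j, hj⟩
  have hSsub : ∀ i j, j ∈ T i → S j ⊆ (S i).image (· + 1) := by
    intro i j hj
    rw [hT i]
    exact Finset.subset_biUnion_of_mem S hj
  -- the blocks cover everything
  have hclose : ∀ m : Fin (N+1), (∃ i, m ∈ S i) → ∃ i, m + 1 ∈ S i := by
    rintro m ⟨i, hi⟩
    have h1 : m + 1 ∈ (S i).image (· + 1) := Finset.mem_image_of_mem _ hi
    rw [hT i] at h1
    obtain ⟨j, _, hj⟩ := Finset.mem_biUnion.mp h1
    exact ⟨j, hj⟩
  obtain ⟨m0, hm0⟩ := hSne i₀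
  have hcover : ∀ m : Fin (N+1), ∃ i, m ∈ S i := by
    have hstep2 : ∀ t : ℕ, ∃ i, m0 + (t : Fin (N+1)) ∈ S i := by
      intro t
      induction t with
      | zero => exact ⟨i₀, by simpa using hm0⟩
      | succ t ih =>
        have e : ((t+1 : ℕ) : Fin (N+1)) = (t : Fin (N+1)) + 1 := by push_cast; ring
        rw [e, ← add_assoc]
        exact hclose _ ih
    intro m
    obtain ⟨i, hi⟩ := hstep2 ((m - m0).val)
    rw [Fin.cast_val_eq_self] at hi
    have e : m0 + (m - m0) = m := by ring
    rw [e] at hi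
    exact ⟨i, hi⟩
  have hTcover : ∀ j, ∃ i, j ∈ T i := by
    intro j
    obtain ⟨m, hm⟩ := hSne j
    obtain ⟨i, hi⟩ := hcover (m - 1)
    have h1 : m ∈ (S i).image (· + 1) := Finset.mem_image.mpr ⟨m - 1, hi, by ring⟩
    rw [hT i] at h1
    obtain ⟨j', hj', hmj'⟩ := Finset.mem_biUnion.mp h1
    exact ⟨i, hun m j' j hmj' hm ▸ hj'⟩
  have hTdisj : ∀ i i', i ≠ i' → Disjoint (T i) (T i') := by
    intro i i' hii
    rw [Finset.disjoint_left]
    intro j hj hj'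
    obtain ⟨m, hm⟩ := hSne j
    obtain ⟨m1, hm1, e1⟩ := Finset.mem_image.mp (hSsub i j hj hm)
    obtain ⟨m2, hm2, e2⟩ := Finset.mem_image.mp (hSsub i' j hj' hm)
    have e3 : m1 = m2 := by
      have := e1.trans e2.symm
      exact add_right_cancel this
    exact hii (hun m1 i i' hm1 (e3 ▸ hm2))
  have hsumT : ∑ i, (T i).card = k := by
    have h1 : Finset.univ.biUnion T = Finset.univ := by
      apply Finset.eq_univ_of_forall
      intro j
      rw [Finset.mem_biUnion]
      obtain ⟨i, hi⟩ := hTcover j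
      exact ⟨i, Finset.mem_univ i, hi⟩
    calc ∑ i, (T i).card = (Finset.univ.biUnion T).card :=
          (Finset.card_biUnion (fun i _ j _ h => hTdisj i j h)).symm
      _ = k := by rw [h1, Finset.card_univ, Fintype.card_fin]
  have hT1 : ∀ i, (T i).card = 1 := by
    by_contra hcon
    push_neg at hcon
    obtain ⟨i0, hi0⟩ := hcon
    have h2 : 1 < (T i0).card := lt_of_le_of_ne (hTne i0).card_pos (Ne.symm hi0)
    have h3 : (k : ℕ) < k := by
      calc k = ∑ _i : Fin k, 1 := by simp
        _ < ∑ i, (T i).card :=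
            Finset.sum_lt_sum (fun i _ => (hTne i).card_pos) ⟨i0, Finset.mem_univ i0, h2⟩
        _ = k := hsumT
    omega
  choose π hπ using fun i => Finset.card_eq_one.mp (hT1 i)
  have himg : ∀ i, (S i).image (· + 1) = S (π i) := by
    intro i
    rw [hT i, hπ i, Finset.singleton_biUnion]
  -- iterating the shift
  have hiter : ∀ t : ℕ, ∃ j, (S i₀).image (fun m => m + (t : Fin (N+1))) = S j := by
    intro t
    induction t with
    | zero => exact ⟨i₀, by simp⟩
    | succ t ih =>
      obtain ⟨j, hj⟩ := ih
      refine ⟨π j, ?_⟩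
      have e : ∀ m : Fin (N+1), m + ((t+1 : ℕ) : Fin (N+1)) = (m + (t : Fin (N+1))) + 1 := by
        intro m; push_cast; ring
      calc (S i₀).image (fun m => m + ((t+1 : ℕ) : Fin (N+1)))
          = ((S i₀).image (fun m => m + (t : Fin (N+1)))).image (· + 1) := by
            rw [Finset.image_image]
            exact Finset.image_congr (fun m _ => e m)
        _ = (S j).image (· + 1) := by rw [hj]
        _ = S (π j) := himg j
  have hcards : ∀ j, (S j).card = (S i₀).card := by
    intro j
    obtain ⟨m, hm⟩ := hSne j
    obtain ⟨j', hj'⟩ := hiter ((m - m0).val)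
    have h1 : m ∈ (S i₀).image (fun x => x + (((m - m0).val : ℕ) : Fin (N+1))) :=
      Finset.mem_image.mpr ⟨m0, hm0, by rw [Fin.cast_val_eq_self]; ring⟩
    rw [hj'] at h1
    have e := hun m j' j h1 hm
    rw [← e, ← hj']
    exact Finset.card_image_of_injective _ (add_left_injective _)
  have hsumS : ∑ j, (S j).card = N + 1 := by
    have h1 : Finset.univ.biUnion S = Finset.univ := by
      apply Finset.eq_univ_of_forall
      intro m
      rw [Finset.mem_biUnion]
      obtain ⟨i, hi⟩ := hcover m
      exact ⟨i, Finset.mem_univ i, hi⟩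
    calc ∑ j, (S j).card = (Finset.univ.biUnion S).card :=
          (Finset.card_biUnion (fun i _ j _ h => hSdisj i j h)).symm
      _ = N + 1 := by rw [h1, Finset.card_univ, Fintype.card_fin]
  have hks : k * (S i₀).card = N + 1 := by
    calc k * (S i₀).card = ∑ _j : Fin k, (S i₀).card := by
          rw [Finset.sum_const, Finset.card_univ, Fintype.card_fin, smul_eq_mul]
      _ = ∑ j, (S j).card := Finset.sum_congr rfl (fun j _ => (hcards j).symm)
      _ = N + 1 := hsumS
  refine ⟨b i₀, hbmem i₀, hbind.ne_zero i₀, ?_⟩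
  rw [wt]
  have hset : {m | b i₀ m ≠ 0} = ↑(S i₀) := by
    ext m
    simp [hS]
  rw [hset, Set.ncard_coe_finset]
  have hdiv : (N + 1) / k = (S i₀).card := by
    conv_lhs => rw [← hks]
    exact Nat.mul_div_cancel_left _ hk
  exact hdiv.symm
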